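/- Let p be prime and let F₂ ⊆ (Z/pZ)^{ℓ₂} be a [0,k-1]-covering family of size N with k ≥ 2, and let S ⊆ Z/pZ satisfy: for all g ∈ Z/pZ there exist i ∈ [0,k-1] and s ∈ S with i·s = g (mod p). Then the family F₃ = {(s₁·v, ..., s_{|S|}·v) : v ∈ F₂} ⊆ (Z/pZ)^{|S|·ℓ₂}, where s₁,...,s_{|S|} enumerate S, is Z/pZ-covering and has size N. -/
import Mathlib


/-- If `F₂` is `[0,k-1]`-covering of size `N` (`k ≥ 2`) and `S` satisfies that every
`g : ZMod p` is `i * s` with `0 ≤ i ≤ k-1`, `s ∈ S`, then the family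
`{(s·v)_{s ∈ S} : v ∈ F₂}` is `ZMod p`-covering of size `N`. -/
theorem stmt9 (p k ℓ₂ N : ℕ) (hp : p.Prime) (hk : 2 ≤ k)
    (F₂ : Finset (Fin ℓ₂ → ZMod p)) (hcard : F₂.card = N)
    (hcov : ∀ v ∈ F₂, ∀ w ∈ F₂, v ≠ w → ∀ i : ℕ, i ≤ k - 1 → ∃ a, v a - w a = (i : ZMod p))
    (S : Finset (ZMod p))
    (hS : ∀ g : ZMod p, ∃ i : ℕ, i ≤ k - 1 ∧ ∃ s ∈ S, (i : ZMod p) * s = g) :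
    (F₂.image fun v => fun q : {x // x ∈ S} × Fin ℓ₂ => (q.1 : ZMod p) * v q.2).card = N ∧
    ∀ u ∈ F₂.image fun v => fun q : {x // x ∈ S} × Fin ℓ₂ => (q.1 : ZMod p) * v q.2,
      ∀ u' ∈ F₂.image fun v => fun q : {x // x ∈ S} × Fin ℓ₂ => (q.1 : ZMod p) * v q.2,
        u ≠ u' → ∀ t : ZMod p, ∃ q, u q - u' q = t := by
  haveI : Fact p.Prime := ⟨hp⟩
  have hone : (1 : ℕ) ≤ k - 1 := by omega
  -- there is a nonzero element of S
  obtain ⟨i₀, hi₀, s₀, hs₀S, hs₀⟩ := hS 1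
  have hs₀ne : s₀ ≠ 0 := by
    intro h; rw [h, mul_zero] at hs₀; exact one_ne_zero hs₀.symm
  -- covering part, proved for preimages
  have key : ∀ v ∈ F₂, ∀ w ∈ F₂, v ≠ w → ∀ t : ZMod p,
      ∃ q : {x // x ∈ S} × Fin ℓ₂, (q.1 : ZMod p) * v q.2 - (q.1 : ZMod p) * w q.2 = t := by
    intro v hv w hw hvw t
    obtain ⟨i, hi, s, hsS, hst⟩ := hS t
    obtain ⟨a, ha⟩ := hcov v hv w hw hvw i hi
    refine ⟨(⟨s, hsS⟩, a), ?_⟩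
    simp only [← mul_sub, ha]
    rw [mul_comm]; exact hst
  constructor
  · rw [Finset.card_image_of_injOn, hcard]
    intro v hv w hw h
    by_contra hvw
    obtain ⟨a, ha⟩ := hcov v hv w hw hvw 1 hone
    have := congrFun h (⟨s₀, hs₀S⟩, a)
    simp only at this
    have : s₀ * (v a - w a) = 0 := by rw [mul_sub, this, sub_self]
    rw [ha] at this
    simp at this
    exact hs₀ne this
  · rintro u hu u' hu' huu' t
    obtain ⟨v, hv, rfl⟩ := Finset.mem_image.mp hu
    obtain ⟨w, hw, rfl⟩ := Finset.mem_image.mp hu'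
    have hvw : v ≠ w := fun h => huu' (by rw [h])
    exact key v hv w hw hvw t
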